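/- Let (λ_1,…,λ_p; π_0,π_1,…,π_p) be a spectral system for A, let m ∈ ℕ satisfy (A − λ_j·1)^{m+1}·π_j = 0 for every j, and define X := ∑_{j=1}^{p} ∑_{i=0}^{m} (−1)^i·(λ_j⁻¹)^{i+1} · (A − λ_j·1)^i · π_j. Then A·X = 1 − π_0. -/

import Mathlib

open Finset

/-- With `X = ∑_j ∑_{i=0}^{m} (-1)^i λ_j^{-(i+1)} (A - λ_j)^i π_j` built from a spectral
system of `A`, one has `A * X = 1 - π₀`. -/
theorem mul_drazin_candidate_eq_one_sub_pi_zero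
    (F : Type*) [Field F] (n : Type*) [Fintype n] [DecidableEq n] [Nonempty n]
    (A : Matrix n n F) (p : ℕ)
    (lam : Fin p → F) (π : Fin (p + 1) → Matrix n n F)
    (hlam : ∀ j, lam j ≠ 0)
    (hsum : ∑ a, π a = 1)
    (horth : ∀ a b, a ≠ b → π a * π b = 0)
    (hidem : ∀ a, π a * π a = π a)
    (hcomm : ∀ a, A * π a = π a * A)
    (m : ℕ) (hm : ∀ j : Fin p, (A - lam j • 1) ^ (m + 1) * π j.succ = 0) :
    A * (∑ j : Fin p, ∑ i ∈ Finset.range (m + 1),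
        ((-1 : F) ^ i * (lam j)⁻¹ ^ (i + 1)) • ((A - lam j • 1) ^ i * π j.succ)) =
      1 - π 0 := by
  have key : ∀ j : Fin p,
      A * (∑ i ∈ Finset.range (m + 1),
        ((-1 : F) ^ i * (lam j)⁻¹ ^ (i + 1)) • ((A - lam j • 1) ^ i * π j.succ)) = π j.succ := by
    intro j
    set c := lam j with hc
    have hc0 : c ≠ 0 := hlam j
    set B := A - c • 1 with hB
    have hA : A = B + c • (1 : Matrix n n F) := (sub_add_cancel A (c • 1)).symm
    set f : ℕ → Matrix n n F := fun i => ((-1 : F) ^ i * c⁻¹ ^ i) • (B ^ i * π j.succ) with hf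
    have step : ∀ i ∈ Finset.range (m + 1),
        A * (((-1 : F) ^ i * c⁻¹ ^ (i + 1)) • (B ^ i * π j.succ)) = f i - f (i + 1) := by
      intro i _
      have hAB : A * (B ^ i * π j.succ)
          = B ^ (i + 1) * π j.succ + c • (B ^ i * π j.succ) := by
        conv_lhs => rw [hA]
        rw [add_mul, pow_succ', mul_assoc, smul_mul_assoc, one_mul]
      rw [mul_smul_comm, hAB, smul_add, smul_smul]
      have h1 : ((-1 : F) ^ i * c⁻¹ ^ (i + 1)) * c = (-1 : F) ^ i * c⁻¹ ^ i := by
        rw [pow_succ]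
        field_simp
      have h2 : ((-1 : F) ^ (i + 1) * c⁻¹ ^ (i + 1)) = -((-1 : F) ^ i * c⁻¹ ^ (i + 1)) := by
        ring
      rw [h1, hf]
      simp only [h2, neg_smul, sub_neg_eq_add]
      abel
    rw [Finset.mul_sum, Finset.sum_congr rfl step, Finset.sum_range_sub' f]
    have hend : f (m + 1) = 0 := by
      rw [hf]
      simp [hm j]
      exact Or.inr (hm j)
    rw [hend, hf]
    simp
  rw [Finset.mul_sum, Finset.sum_congr rfl (fun j _ => key j)]
  have := hsum
  rw [Fin.sum_univ_succ] at this
  linear_combination (norm := abel) this
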